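/- Derandomization of estimates at the cost of doubling the risk and the accuracy: let Y be a set, (Ω, F) a measurable space, and for each x ∈ Y let P_x be a probability measure on Ω. Let U be Lebesgue measure on [0,1], ρ > 0, 0 < υ < 1/4, and let φ : Ω × [0,1] → ℝⁿ be measurable (with respect to the product σ-algebra) and satisfy, for every x ∈ Y, (P_x × U)({(ω, ζ) : ‖φ(ω,ζ) - x‖ > ρ}) ≤ υ, where ‖·‖ is a seminorm on ℝⁿ. Then there exists a function ψ : Ω → ℝⁿ such that for every x ∈ Y, the outer P_x-measure of {ω : ‖ψ(ω) - x‖ > 2ρ} is at most 2υ. -/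

import Mathlib

open MeasureTheory

/-- Any seminorm on `Fin n → ℝ` is continuous. -/
lemma seminorm_pi_continuous {n : ℕ} (p : Seminorm ℝ (Fin n → ℝ)) :
    Continuous fun v : Fin n → ℝ => p v := by
  classical
  set C : ℝ := ∑ i : Fin n, p (Pi.single i 1) with hC
  have hsum : ∀ (s : Finset (Fin n)) (g : Fin n → (Fin n → ℝ)),
      p (∑ i ∈ s, g i) ≤ ∑ i ∈ s, p (g i) := by
    intro s g
    induction s using Finset.induction with
    | empty => simp
    | @insert a s h ih =>
      rw [Finset.sum_insert h, Finset.sum_insert h]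
      exact (map_add_le_add p _ _).trans (by gcongr)
  have hbound : ∀ v : Fin n → ℝ, p v ≤ C * ‖v‖ := by
    intro v
    have hv : v = ∑ i : Fin n, v i • (Pi.single i (1:ℝ) : Fin n → ℝ) := by
      ext j
      simp [Pi.single_apply, Finset.sum_apply, mul_ite]
    calc p v = p (∑ i : Fin n, v i • (Pi.single i (1:ℝ) : Fin n → ℝ)) := by rw [← hv]
    _ ≤ ∑ i : Fin n, p (v i • (Pi.single i (1:ℝ) : Fin n → ℝ)) := hsum _ _
    _ = ∑ i : Fin n, |v i| * p (Pi.single i 1) := by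
        simp [map_smul_eq_mul, Real.norm_eq_abs]
    _ ≤ ∑ i : Fin n, ‖v‖ * p (Pi.single i 1) := by
        refine Finset.sum_le_sum fun i _ => ?_
        exact mul_le_mul_of_nonneg_right
          (by simpa [Real.norm_eq_abs] using norm_le_pi_norm v i) (apply_nonneg p _)
    _ = C * ‖v‖ := by rw [hC, Finset.sum_mul]; exact Finset.sum_congr rfl (by intros; ring)
  have hC0 : 0 ≤ C := Finset.sum_nonneg fun i _ => apply_nonneg p _
  have hlip : LipschitzWith C.toNNReal fun v => p v := by
    refine LipschitzWith.of_dist_le_mul fun a b => ?_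
    rw [Real.dist_eq, dist_eq_norm]
    calc |p a - p b| ≤ p (a - b) := abs_sub_map_le_sub p a b
    _ ≤ C * ‖a - b‖ := hbound _
    _ = (C.toNNReal : ℝ) * ‖a - b‖ := by rw [Real.coe_toNNReal _ hC0]
  exact hlip.continuous

/-- Derandomization of estimates at the cost of doubling the risk and accuracy: if a
randomized estimate `φ(ω,ζ)` (with `ζ` uniform on `[0,1]`) recovers every `x ∈ Y` within
`ρ` with probability `≥ 1 - υ`, `υ < 1/4`, then there is a deterministic `ψ(ω)` recovering
every `x ∈ Y` within `2ρ` with outer probability of failure at most `2υ`. -/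
theorem derandomization (n : ℕ) (Y : Set (Fin n → ℝ))
    (Ω : Type*) [MeasurableSpace Ω] (P : (Fin n → ℝ) → Measure Ω)
    (hP : ∀ x ∈ Y, IsProbabilityMeasure (P x))
    (nrm : Seminorm ℝ (Fin n → ℝ))
    (ρ υ : ℝ) (hρ : 0 < ρ) (hυ0 : 0 < υ) (hυ : υ < 1 / 4)
    (φ : Ω → ℝ → (Fin n → ℝ))
    (hφm : Measurable (fun p : Ω × ℝ => φ p.1 p.2))
    (hrisk : ∀ x ∈ Y,
      ((P x).prod ((volume : Measure ℝ).restrict (Set.Icc 0 1)))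
        {p : Ω × ℝ | ρ < nrm (φ p.1 p.2 - x)} ≤ ENNReal.ofReal υ) :
    ∃ ψ : Ω → (Fin n → ℝ), ∀ x ∈ Y,
      P x {ω | 2 * ρ < nrm (ψ ω - x)} ≤ ENNReal.ofReal (2 * υ) := by
  classical
  set U : Measure ℝ := (volume : Measure ℝ).restrict (Set.Icc 0 1) with hU
  have hUuniv : U Set.univ = 1 := by
    simp [hU, Real.volume_Icc]
  have hcont : Continuous fun v : Fin n → ℝ => nrm v := seminorm_pi_continuous nrm
  -- the "good" predicate and the deterministic estimator
  set good : Ω → (Fin n → ℝ) → Prop :=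
    fun ω y => (1/2 : ENNReal) < U {ζ | nrm (φ ω ζ - y) ≤ ρ} with hgood
  set ψ : Ω → (Fin n → ℝ) :=
    fun ω => if h : ∃ y, good ω y then h.choose else 0 with hψ
  refine ⟨ψ, fun x hx => ?_⟩
  haveI := hP x hx
  -- measurability facts
  have hSm : MeasurableSet {p : Ω × ℝ | ρ < nrm (φ p.1 p.2 - x)} := by
    have hm : Measurable fun p : Ω × ℝ => nrm (φ p.1 p.2 - x) :=
      hcont.measurable.comp (hφm.sub measurable_const)
    exact measurableSet_lt measurable_const hm
  have hφω : ∀ ω, Measurable fun ζ : ℝ => φ ω ζ := by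
    intro ω
    exact hφm.comp (measurable_prodMk_left)
  have hsecm : ∀ (ω : Ω) (y : Fin n → ℝ),
      MeasurableSet {ζ : ℝ | ρ < nrm (φ ω ζ - y)} := by
    intro ω y
    have hm : Measurable fun ζ : ℝ => nrm (φ ω ζ - y) :=
      hcont.measurable.comp ((hφω ω).sub measurable_const)
    exact measurableSet_lt measurable_const hm
  -- the bad set and Markov's inequality
  set B : Set Ω := {ω | (1/2 : ENNReal) ≤ U {ζ | ρ < nrm (φ ω ζ - x)}} with hBdef
  have hf : Measurable fun ω =>
      U (Prod.mk ω ⁻¹' {p : Ω × ℝ | ρ < nrm (φ p.1 p.2 - x)}) :=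
    measurable_measure_prodMk_left hSm
  have hfub : ∫⁻ ω, U (Prod.mk ω ⁻¹' {p : Ω × ℝ | ρ < nrm (φ p.1 p.2 - x)}) ∂(P x)
      ≤ ENNReal.ofReal υ := by
    rw [← Measure.prod_apply hSm]
    exact hrisk x hx
  have hB : P x B ≤ ENNReal.ofReal (2 * υ) := by
    have hmk : ∀ ω : Ω, Prod.mk ω ⁻¹' {p : Ω × ℝ | ρ < nrm (φ p.1 p.2 - x)}
        = {ζ | ρ < nrm (φ ω ζ - x)} := fun ω => rfl
    have h2 : P x B ≤ (∫⁻ ω, U (Prod.mk ω ⁻¹' {p : Ω × ℝ | ρ < nrm (φ p.1 p.2 - x)}) ∂(P x))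
        / (1/2 : ENNReal) := by
      have := meas_ge_le_lintegral_div (μ := P x) hf.aemeasurable
        (ε := (1/2 : ENNReal)) (by norm_num) (by norm_num)
      simpa [hBdef, hmk] using this
    calc P x B ≤ ENNReal.ofReal υ / (1/2 : ENNReal) := by
          exact h2.trans (ENNReal.div_le_div_right hfub _)
    _ = 2 * ENNReal.ofReal υ := by
          rw [ENNReal.div_eq_inv_mul, one_div, inv_inv]
    _ = ENNReal.ofReal (2 * υ) := by
          rw [ENNReal.ofReal_mul (by norm_num)]
          norm_num
  -- the failure set is contained in B
  have hsub : {ω | 2 * ρ < nrm (ψ ω - x)} ⊆ B := by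
    intro ω hω
    by_contra hωB
    have hlt : U {ζ | ρ < nrm (φ ω ζ - x)} < 1/2 := lt_of_not_ge hωB
    -- the complement has measure > 1/2
    have hcompl : (1/2 : ENNReal) < U {ζ | nrm (φ ω ζ - x) ≤ ρ} := by
      have hc : {ζ : ℝ | nrm (φ ω ζ - x) ≤ ρ} = {ζ | ρ < nrm (φ ω ζ - x)}ᶜ := by
        ext ζ; simp [not_lt]
      rw [hc, measure_compl (hsecm ω x) (by
        exact ne_top_of_le_ne_top (by simp [hUuniv]) (measure_mono (Set.subset_univ _))), hUuniv]
      have hne : U {ζ | ρ < nrm (φ ω ζ - x)} ≠ ⊤ :=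
        ne_top_of_le_ne_top (by simp [hUuniv]) (measure_mono (Set.subset_univ _))
      rw [(ENNReal.cancel_of_ne hne).lt_tsub_iff_right]
      calc (1:ENNReal)/2 + U {ζ | ρ < nrm (φ ω ζ - x)} < 1/2 + 1/2 :=
            ENNReal.add_lt_add_left (by norm_num) hlt
      _ = 1 := by rw [one_div]; exact ENNReal.inv_two_add_inv_two
    have hgx : good ω x := hcompl
    have hex : ∃ y, good ω y := ⟨x, hgx⟩
    have hgψ : good ω (ψ ω) := by
      rw [hψ]; simp only [dif_pos hex]; exact hex.choose_spec
    -- the two good sets intersect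
    set A1 : Set ℝ := {ζ | nrm (φ ω ζ - x) ≤ ρ} with hA1
    set A2 : Set ℝ := {ζ | nrm (φ ω ζ - ψ ω) ≤ ρ} with hA2
    have hA1m : MeasurableSet A1 := by
      have hc : A1 = {ζ | ρ < nrm (φ ω ζ - x)}ᶜ := by ext ζ; simp [hA1, not_lt]
      rw [hc]; exact (hsecm ω x).compl
    have hinter : (A1 ∩ A2).Nonempty := by
      by_contra hne
      rw [Set.not_nonempty_iff_eq_empty] at hne
      have hkey := measure_union_add_inter (μ := U) A2 hA1m
      rw [Set.union_comm, Set.inter_comm, hne, measure_empty, add_zero] at hkey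
      have hle : U (A1 ∪ A2) ≤ 1 := by
        rw [← hUuniv]; exact measure_mono (Set.subset_univ _)
      have hgt : (1 : ENNReal) < U A1 + U A2 := by
        calc (1 : ENNReal) = 1/2 + 1/2 := by
              rw [one_div]; exact ENNReal.inv_two_add_inv_two.symm
        _ < U A1 + U A2 := ENNReal.add_lt_add hcompl hgψ
      rw [hkey, add_comm] at hle
      exact absurd hle (not_le.mpr hgt)
    obtain ⟨ζ, hζ1, hζ2⟩ := hinter
    have : nrm (ψ ω - x) ≤ 2 * ρ := by
      calc nrm (ψ ω - x) = nrm ((ψ ω - φ ω ζ) + (φ ω ζ - x)) := by ring_nf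
      _ ≤ nrm (ψ ω - φ ω ζ) + nrm (φ ω ζ - x) := map_add_le_add nrm _ _
      _ = nrm (φ ω ζ - ψ ω) + nrm (φ ω ζ - x) := by rw [map_sub_rev]
      _ ≤ ρ + ρ := add_le_add hζ2 hζ1
      _ = 2 * ρ := by ring
    exact absurd hω (not_lt.mpr (by simpa using this))
  exact le_trans (measure_mono hsub) hB
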